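/- Let λ = 1/√5 and μ ∈ (0,1/2). There exists M > 1, depending only on μ, such that for all R > 0, all r ∈ (0, R/2), and all a, b ∈ ℝ with MR ≤ a ≤ b, the helix γ(t) = (r cos t, r sin t, μ r t) (with γ'(t) = (−r sin t, r cos t, μ r)) satisfies: for every τ ≤ 0 and every point p = (u cos θ, u sin θ, z) with 0 ≤ u ≤ R, θ ∈ ℝ, and a ≤ z ≤ b, ⟨γ'(τ), p − γ(τ)⟩ ≤ λ‖γ'(τ)‖‖p − γ(τ)‖; that is, the open cone of half-aperture arccos(1/√5) with vertex γ(τ) directed by γ'(τ) does not meet the solid cylinder {(x,y,z) : x² + y² ≤ R², a ≤ z ≤ b}. -/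

import Mathlib

open scoped RealInnerProductSpace
open Set

/-- The helix `t ↦ (r cos t, r sin t, μ r t)` in `ℝ³`. -/
noncomputable def helix (r μ t : ℝ) : EuclideanSpace ℝ (Fin 3) :=
  WithLp.toLp 2 ![r * Real.cos t, r * Real.sin t, μ * r * t]

/-- The derivative `t ↦ (−r sin t, r cos t, μ r)` of the helix. -/
noncomputable def helixD (r μ t : ℝ) : EuclideanSpace ℝ (Fin 3) :=
  WithLp.toLp 2 ![-(r * Real.sin t), r * Real.cos t, μ * r]

/-- A point `(u cos θ, u sin θ, z)` of the solid cylinder of radius `R`. -/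
noncomputable def solidCylPt (u θ z : ℝ) : EuclideanSpace ℝ (Fin 3) :=
  WithLp.toLp 2 ![u * Real.cos θ, u * Real.sin θ, z]

set_option maxHeartbeats 1000000 in
/-- For `λ = 1/√5` and `μ ∈ (0,1/2)` there is `M > 1`, depending only on
`μ`, such that for all `R > 0`, `r ∈ (0, R/2)` and `MR ≤ a ≤ b`, the open cone of
half-aperture `arccos(1/√5)` attached to the helix of radius `r` at `γ(τ)`, `τ ≤ 0`,
does not meet the solid cylinder `{x² + y² ≤ R², a ≤ z ≤ b}`. -/
theorem helix_cone_avoids_remote_cylinder (μ : ℝ) (hμ0 : 0 < μ) (hμ : μ < 1 / 2) :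
    ∃ M : ℝ, 1 < M ∧
      ∀ R r a b : ℝ, 0 < R → 0 < r → r < R / 2 → M * R ≤ a → a ≤ b →
        ∀ τ : ℝ, τ ≤ 0 →
          ∀ u θ z : ℝ, 0 ≤ u → u ≤ R → a ≤ z → z ≤ b →
            ⟪helixD r μ τ, solidCylPt u θ z - helix r μ τ⟫ ≤
              (1 / Real.sqrt 5) * ‖helixD r μ τ‖ * ‖solidCylPt u θ z - helix r μ τ‖ := by
  set s5 : ℝ := Real.sqrt 5 with hs5
  have hs5pos : 0 < s5 := Real.sqrt_pos.2 (by norm_num)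
  set sμ : ℝ := Real.sqrt (1 + μ ^ 2) with hsμ
  have hsμpos : 0 < sμ := Real.sqrt_pos.2 (by positivity)
  have hs5sq : s5 ^ 2 = 5 := Real.sq_sqrt (by norm_num)
  have hsμsq : sμ ^ 2 = 1 + μ ^ 2 := Real.sq_sqrt (by positivity)
  -- since μ < 1/2, we have √5 · μ < √(1+μ²)
  have hkey : s5 * μ < sμ := by
    have h1 : s5 * μ = Real.sqrt (5 * μ ^ 2) := by
      rw [Real.sqrt_mul (by norm_num : (0:ℝ) ≤ 5), Real.sqrt_sq hμ0.le]
    rw [h1, hsμ]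
    exact Real.sqrt_lt_sqrt (by positivity) (by nlinarith)
  have hd : 0 < sμ - s5 * μ := by linarith
  have hMpos : 0 < s5 / (sμ - s5 * μ) + 2 := by
    have := div_pos hs5pos hd; linarith
  refine ⟨s5 / (sμ - s5 * μ) + 2, by
    have := div_pos hs5pos hd; linarith, ?_⟩
  intro R r a b hR hr hrR hMa hab τ hτ u θ z hu0 huR haz hzb
  have hapos : 0 < a := lt_of_lt_of_le (mul_pos hMpos hR) hMa
  have hμrτ : μ * r * τ ≤ 0 := mul_nonpos_of_nonneg_of_nonpos (by positivity) hτ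
  have hMc : s5 ≤ (sμ - s5 * μ) * (s5 / (sμ - s5 * μ) + 2) := by
    rw [mul_add, mul_div_cancel₀ _ hd.ne']
    nlinarith
  -- the vertical gap w
  set w : ℝ := z - μ * r * τ with hw
  have hwa : a ≤ w := by rw [hw]; linarith
  have hwpos : 0 < w := lt_of_lt_of_le hapos hwa
  -- inner product formula
  have hinner : ⟪helixD r μ τ, solidCylPt u θ z - helix r μ τ⟫ =
      r * u * Real.sin (θ - τ) + μ * r * w := by
    simp [helixD, helix, solidCylPt, PiLp.inner_apply, Fin.sum_univ_three,
      RCLike.inner_apply, Real.sin_sub, hw]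
    ring
  -- norm of the derivative
  have hD : ‖helixD r μ τ‖ = r * sμ := by
    rw [EuclideanSpace.norm_eq]
    have h1 : ∑ i : Fin 3, ‖helixD r μ τ i‖ ^ 2 = r ^ 2 * (1 + μ ^ 2) := by
      simp [helixD, Fin.sum_univ_three, sq_abs]
      nlinarith [Real.sin_sq_add_cos_sq τ]
    rw [h1, Real.sqrt_mul (by positivity), Real.sqrt_sq hr.le, hsμ]
  -- lower bound on the distance
  have hN : w ≤ ‖solidCylPt u θ z - helix r μ τ‖ := by
    rw [EuclideanSpace.norm_eq,
      show w = Real.sqrt (w ^ 2) from (Real.sqrt_sq hwpos.le).symm]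
    apply Real.sqrt_le_sqrt
    simp [solidCylPt, helix, Fin.sum_univ_three, sq_abs, hw]
    positivity
  -- the key smallness estimate: √5 · u ≤ (√(1+μ²) − √5 μ) · w
  have h5u : s5 * u ≤ (sμ - s5 * μ) * w := by
    have hMRw : (s5 / (sμ - s5 * μ) + 2) * R ≤ w := le_trans hMa hwa
    have hMu : (s5 / (sμ - s5 * μ) + 2) * u ≤ w :=
      le_trans (by nlinarith [div_nonneg hs5pos.le hd.le]) hMRw
    nlinarith [mul_le_mul_of_nonneg_left hMu hd.le]
  rw [hinner, hD]
  calc r * u * Real.sin (θ - τ) + μ * r * w ≤ r * u + μ * r * w := by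
        nlinarith [Real.sin_le_one (θ - τ), mul_nonneg hr.le hu0]
    _ ≤ 1 / s5 * (r * sμ) * w := by
        rw [show 1 / s5 * (r * sμ) * w = r * sμ * w / s5 by ring, le_div_iff₀ hs5pos]
        nlinarith [mul_le_mul_of_nonneg_left h5u hr.le]
    _ ≤ 1 / s5 * (r * sμ) * ‖solidCylPt u θ z - helix r μ τ‖ := by
        apply mul_le_mul_of_nonneg_left hN (by positivity)
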